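/- arXiv:1505.07903 — 2 statements merged into one kernel-verified Lean document; each statement's English description precedes it below -/
import Mathlib

section
/- Let C = (c_{jk}) be a real m×m matrix with c_{jk} ≤ 0 for all j ≠ k. Then all leading (successive) principal minors of C are positive if and only if every eigenvalue of C (i.e., every complex root of its characteristic polynomial) has positive real part. -/
/-- All leading (successive) principal minors of a square matrix are positive. -/
def LeadingMinorsPos {m : ℕ} (C : Matrix (Fin m) (Fin m) ℝ) : Prop :=
  ∀ (k : ℕ) (h : k ≤ m), 0 < ((C.submatrix (Fin.castLE h) (Fin.castLE h)).det)

open Matrix Polynomial Finset Filter Topology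

namespace MM

def IsZ {m : ℕ} (A : Matrix (Fin m) (Fin m) ℝ) : Prop := ∀ i j, i ≠ j → A i j ≤ 0


lemma diag_pos {m : ℕ} (A : Matrix (Fin m) (Fin m) ℝ) (x : Fin m → ℝ)
    (hx : ∀ i, 0 < x i)
    (hdom : ∀ i, ∑ j ∈ univ.erase i, |A i j| * x j < A i i * x i) (i : Fin m) :
    0 < A i i := by
  have h0 : (0:ℝ) ≤ ∑ j ∈ univ.erase i, |A i j| * x j :=
    Finset.sum_nonneg fun j _ => mul_nonneg (abs_nonneg _) (hx j).le
  nlinarith [h0.trans_lt (hdom i), hx i]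

lemma det_ne_zero_of_dom {m : ℕ} (A : Matrix (Fin m) (Fin m) ℝ) (x : Fin m → ℝ)
    (hx : ∀ i, 0 < x i)
    (hdom : ∀ i, ∑ j ∈ univ.erase i, |A i j| * x j < A i i * x i) :
    A.det ≠ 0 := by
  intro hdet
  obtain ⟨v, hv0, hv⟩ := (Matrix.exists_mulVec_eq_zero_iff).2 hdet
  obtain ⟨i₀, hi₀⟩ : ∃ i, v i ≠ 0 := by
    by_contra h; push_neg at h; exact hv0 (funext h)
  obtain ⟨i, -, hi⟩ := Finset.exists_max_image univ (fun j => |v j| / x j) ⟨i₀, mem_univ i₀⟩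
  set r := |v i| / x i with hr
  have hrpos : 0 < r := lt_of_lt_of_le (div_pos (abs_pos.2 hi₀) (hx i₀)) (hi i₀ (mem_univ i₀))
  have hvi : |v i| = r * x i := by
    rw [hr, div_mul_cancel₀]
    exact (hx i).ne'
  have hvj : ∀ j, |v j| ≤ r * x j := by
    intro j
    have := hi j (mem_univ j)
    rw [div_le_iff₀ (hx j)] at this
    linarith [this]
  have hrow : A i i * v i + ∑ j ∈ univ.erase i, A i j * v j = 0 := by
    have := congrFun hv i
    simpa [Matrix.mulVec, dotProduct, Finset.add_sum_erase univ (fun j => A i j * v j) (mem_univ i)]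
      using this
  have hAipos : 0 < A i i := diag_pos A x hx hdom i
  have h1 : A i i * |v i| ≤ ∑ j ∈ univ.erase i, |A i j| * |v j| := by
    calc A i i * |v i| = |A i i * v i| := by rw [abs_mul, abs_of_pos hAipos]
    _ = |∑ j ∈ univ.erase i, A i j * v j| := by rw [show A i i * v i = -∑ j ∈ univ.erase i, A i j * v j by linarith [hrow]]; rw [abs_neg]
    _ ≤ ∑ j ∈ univ.erase i, |A i j * v j| := Finset.abs_sum_le_sum_abs _ _
    _ = ∑ j ∈ univ.erase i, |A i j| * |v j| := by simp [abs_mul]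
  have h2 : ∑ j ∈ univ.erase i, |A i j| * |v j| ≤ r * ∑ j ∈ univ.erase i, |A i j| * x j := by
    rw [Finset.mul_sum]
    refine Finset.sum_le_sum fun j _ => ?_
    have := hvj j
    have habs : (0:ℝ) ≤ |A i j| := abs_nonneg _
    calc |A i j| * |v j| ≤ |A i j| * (r * x j) := mul_le_mul_of_nonneg_left (hvj j) habs
    _ = r * (|A i j| * x j) := by ring
  have h3 : r * ∑ j ∈ univ.erase i, |A i j| * x j < r * (A i i * x i) :=
    (mul_lt_mul_iff_right₀ hrpos).2 (hdom i)
  rw [hvi] at h1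
  nlinarith

lemma det_pos_of_dom {m : ℕ} (A : Matrix (Fin m) (Fin m) ℝ) (x : Fin m → ℝ)
    (hx : ∀ i, 0 < x i)
    (hdom : ∀ i, ∑ j ∈ univ.erase i, |A i j| * x j < A i i * x i) :
    0 < A.det := by
  classical
  set d : Fin m → ℝ := fun i => A i i with hd
  set N : Matrix (Fin m) (Fin m) ℝ := A - Matrix.diagonal d with hN
  set F : ℝ → Matrix (Fin m) (Fin m) ℝ := fun θ => Matrix.diagonal d + θ • N with hF
  have hFdiag : ∀ θ i, F θ i i = A i i := by
    intro θ i; simp [hF, hN, hd, Matrix.diagonal_apply_eq]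
  have hFoff : ∀ θ (i j : Fin m), i ≠ j → F θ i j = θ * A i j := by
    intro θ i j hij
    simp [hF, hN, hd, Matrix.diagonal_apply_ne _ hij]
  have hdomF : ∀ θ ∈ Set.Icc (0:ℝ) 1, ∀ i,
      ∑ j ∈ univ.erase i, |F θ i j| * x j < F θ i i * x i := by
    rintro θ ⟨hθ0, hθ1⟩ i
    rw [hFdiag]
    refine lt_of_le_of_lt ?_ (hdom i)
    refine Finset.sum_le_sum fun j hj => ?_
    have hij : i ≠ j := (Finset.ne_of_mem_erase hj).symm
    rw [hFoff θ i j hij, abs_mul, abs_of_nonneg hθ0]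
    have : θ * |A i j| ≤ |A i j| := by
      nlinarith [abs_nonneg (A i j)]
    exact mul_le_mul_of_nonneg_right this (hx j).le
  have hcont : Continuous fun θ => (F θ).det := by
    refine Continuous.matrix_det ?_
    refine continuous_matrix  fun i j => ?_
    simp only [hF, Matrix.add_apply, Matrix.smul_apply, smul_eq_mul]
    exact continuous_const.add (continuous_id.mul continuous_const)
  have hne : ∀ θ ∈ Set.Icc (0:ℝ) 1, (F θ).det ≠ 0 :=
    fun θ hθ => det_ne_zero_of_dom (F θ) x hx (hdomF θ hθ)
  have hF0 : (F 0).det = ∏ i, A i i := by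
    simp [hF, Matrix.det_diagonal, hd]
  have hF1 : F 1 = A := by
    simp [hF, hN]
  have hpos0 : 0 < (F 0).det := by
    rw [hF0]
    exact Finset.prod_pos fun i _ => diag_pos A x hx hdom i
  by_contra hle
  push_neg at hle
  have hlt : (F 1).det < 0 := by
    rw [hF1]
    rcases hle.lt_or_eq with h | h
    · exact h
    · exact absurd (hF1 ▸ h) (hne 1 ⟨zero_le_one, le_refl 1⟩)
  have := intermediate_value_Icc' (zero_le_one) (hcont.continuousOn (s := Set.Icc 0 1))
  have h0mem : (0:ℝ) ∈ Set.Icc ((F 1).det) ((F 0).det) := ⟨hlt.le, hpos0.le⟩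
  obtain ⟨θ, hθ, hθ0⟩ := this h0mem
  exact hne θ hθ hθ0

lemma dom_of_Z {m : ℕ} (A : Matrix (Fin m) (Fin m) ℝ) (hZ : IsZ A) (x : Fin m → ℝ)
    (hx : ∀ i, 0 < x i) (hAx : ∀ i, 0 < A.mulVec x i) :
    ∀ i, ∑ j ∈ univ.erase i, |A i j| * x j < A i i * x i := by
  intro i
  have hsum : A.mulVec x i = A i i * x i + ∑ j ∈ univ.erase i, A i j * x j := by
    have hv : A.mulVec x i = ∑ j, A i j * x j := by simp [Matrix.mulVec, dotProduct]
    rw [hv, ← Finset.add_sum_erase univ (fun j => A i j * x j) (mem_univ i)]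
  have habs : ∑ j ∈ univ.erase i, |A i j| * x j = -∑ j ∈ univ.erase i, A i j * x j := by
    rw [← Finset.sum_neg_distrib]
    refine Finset.sum_congr rfl fun j hj => ?_
    have hij : i ≠ j := (Finset.ne_of_mem_erase hj).symm
    rw [abs_of_nonpos (hZ i j hij)]; ring
  have := hAx i
  rw [hsum] at this
  linarith [habs]

lemma det_pos_of_Z {m : ℕ} (A : Matrix (Fin m) (Fin m) ℝ) (hZ : IsZ A) (x : Fin m → ℝ)
    (hx : ∀ i, 0 < x i) (hAx : ∀ i, 0 < A.mulVec x i) : 0 < A.det :=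
  det_pos_of_dom A x hx (dom_of_Z A hZ x hx hAx)

lemma minorsPos_of_pos_vec {m : ℕ} (A : Matrix (Fin m) (Fin m) ℝ) (hZ : IsZ A) (x : Fin m → ℝ)
    (hx : ∀ i, 0 < x i) (hAx : ∀ i, 0 < A.mulVec x i) : LeadingMinorsPos A := by
  intro k hk
  classical
  set B := A.submatrix (Fin.castLE hk) (Fin.castLE hk) with hB
  have hBZ : IsZ B := by
    intro i j hij
    exact hZ _ _ (fun h => hij (Fin.castLE_injective hk h))
  refine det_pos_of_Z B hBZ (fun i => x (Fin.castLE hk i)) (fun i => hx _) ?_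
  intro i
  set s : Finset (Fin m) := Finset.image (Fin.castLE hk) univ with hs
  have hmem : Fin.castLE hk i ∈ s := Finset.mem_image_of_mem _ (mem_univ i)
  have hsum1 : B.mulVec (fun q => x (Fin.castLE hk q)) i
      = ∑ j ∈ s, A (Fin.castLE hk i) j * x j := by
    rw [Finset.sum_image (fun a _ b _ h => Fin.castLE_injective hk h)]
    simp [Matrix.mulVec, dotProduct, hB]
  have hsplit : ∑ j ∈ s, A (Fin.castLE hk i) j * x j
      = A.mulVec x (Fin.castLE hk i) - ∑ j ∈ univ \ s, A (Fin.castLE hk i) j * x j := by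
    have h1 := Finset.sum_sdiff (f := fun j => A (Fin.castLE hk i) j * x j) (Finset.subset_univ s)
    have hv2 : A.mulVec x (Fin.castLE hk i) = ∑ j, A (Fin.castLE hk i) j * x j := by
      simp [Matrix.mulVec, dotProduct]
    rw [hv2]
    linarith [h1]
  have hnonpos : ∑ j ∈ univ \ s, A (Fin.castLE hk i) j * x j ≤ 0 := by
    refine Finset.sum_nonpos fun j hj => ?_
    have hjs : j ∉ s := (Finset.mem_sdiff.1 hj).2
    have hne : Fin.castLE hk i ≠ j := fun h => hjs (h ▸ hmem)
    exact mul_nonpos_of_nonpos_of_nonneg (hZ _ _ hne) (hx j).le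
  rw [hsum1, hsplit]
  have := hAx (Fin.castLE hk i)
  linarith

lemma det_eq_schur {n : ℕ} (A : Matrix (Fin (n+1)) (Fin (n+1)) ℝ) (w : Fin n → ℝ)
    (hD : (A.submatrix Fin.castSucc Fin.castSucc).det ≠ 0)
    (hw : (A.submatrix Fin.castSucc Fin.castSucc).mulVec w
        = fun i => -(A (Fin.castSucc i) (Fin.last n))) :
    A.det = (A.submatrix Fin.castSucc Fin.castSucc).det *
      (A (Fin.last n) (Fin.last n) + (fun j => A (Fin.last n) (Fin.castSucc j)) ⬝ᵥ w) := by
  classical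
  set D := A.submatrix Fin.castSucc Fin.castSucc with hDdef
  set b : Fin n → ℝ := fun i => A (Fin.castSucc i) (Fin.last n) with hbdef
  set c : Fin n → ℝ := fun j => A (Fin.last n) (Fin.castSucc j) with hcdef
  set d : ℝ := A (Fin.last n) (Fin.last n) with hddef
  haveI : Invertible D := Matrix.invertibleOfIsUnitDet D (isUnit_iff_ne_zero.2 hD)
  set Bm : Matrix (Fin n) (Fin 1) ℝ := Matrix.of (fun i _ => b i) with hBm
  set Cm : Matrix (Fin 1) (Fin n) ℝ := Matrix.of (fun _ j => c j) with hCm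
  set dm : Matrix (Fin 1) (Fin 1) ℝ := Matrix.of (fun _ _ => d) with hdm
  have key : A.submatrix finSumFinEquiv finSumFinEquiv = Matrix.fromBlocks D Bm Cm dm := by
    ext i j
    have hinr : ∀ q : Fin 1, finSumFinEquiv (Sum.inr q : Fin n ⊕ Fin 1) = Fin.last n := by
      intro q
      have : (q : ℕ) = 0 := by omega
      simp [finSumFinEquiv_apply_right, Fin.ext_iff, this]
    have hinl : ∀ q : Fin n, finSumFinEquiv (Sum.inl q : Fin n ⊕ Fin 1) = Fin.castSucc q := by
      intro q; simp [finSumFinEquiv_apply_left, Fin.ext_iff]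
    cases i with
    | inl i =>
      cases j with
      | inl j => simp [hinl, hDdef]
      | inr j => simp [hinl, hinr, hBm, hbdef]
    | inr i =>
      cases j with
      | inl j => simp [hinl, hinr, hCm, hcdef]
      | inr j => simp [hinr, hdm, hddef]
  have hdet : A.det = (Matrix.fromBlocks D Bm Cm dm).det := by
    rw [← key, Matrix.det_submatrix_equiv_self]
  rw [hdet, Matrix.det_fromBlocks₁₁]
  congr 1
  rw [Matrix.det_fin_one]
  have hinv : (⅟ D).mulVec b = -w := by
    have h1 : (⅟ D).mulVec (D.mulVec w) = w := by
      rw [Matrix.mulVec_mulVec, invOf_mul_self, Matrix.one_mulVec]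
    rw [hw] at h1
    have : (fun i => -b i) = -b := by funext i; rfl
    rw [this, Matrix.mulVec_neg] at h1
    exact neg_eq_iff_eq_neg.mp h1
  have hentry : (Cm * ⅟ D * Bm) 0 0 = c ⬝ᵥ ((⅟ D).mulVec b) := by
    simp only [Matrix.mul_apply, dotProduct, Matrix.mulVec, hCm, hBm, Matrix.of_apply]
    simp only [Finset.sum_mul, Finset.mul_sum]
    rw [Finset.sum_comm]
    exact Finset.sum_congr rfl fun i _ => Finset.sum_congr rfl fun j _ => by ring
  rw [Matrix.sub_apply, hentry, hinv, dotProduct_neg]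
  simp [hdm]

lemma solve_nonneg : ∀ (n : ℕ) (A : Matrix (Fin n) (Fin n) ℝ), IsZ A → LeadingMinorsPos A →
    ∀ y : Fin n → ℝ, (∀ i, 0 ≤ y i) → ∃ x : Fin n → ℝ, (∀ i, 0 ≤ x i) ∧ A.mulVec x = y := by
  intro n
  induction n with
  | zero =>
    intro A _ _ y _
    exact ⟨fun _ => 0, fun i => le_refl 0, funext fun i => i.elim0⟩
  | succ n ih =>
    intro A hZ hM y hy
    set D := A.submatrix Fin.castSucc Fin.castSucc with hDdef
    have hDZ : IsZ D := fun i j hij => hZ _ _ (fun h => hij (Fin.castSucc_injective n h))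
    have hDM : LeadingMinorsPos D := by
      intro k hk
      have he : (D.submatrix (Fin.castLE hk) (Fin.castLE hk))
          = A.submatrix (Fin.castLE (hk.trans (Nat.le_succ n)))
            (Fin.castLE (hk.trans (Nat.le_succ n))) := by
        rw [hDdef, Matrix.submatrix_submatrix]; rfl
      rw [he]; exact hM k _
    have hDdet : 0 < D.det := by
      have he : D = A.submatrix (Fin.castLE (Nat.le_succ n)) (Fin.castLE (Nat.le_succ n)) := rfl
      rw [he]; exact hM n (Nat.le_succ n)
    set b : Fin n → ℝ := fun i => A (Fin.castSucc i) (Fin.last n) with hbdef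
    set c : Fin n → ℝ := fun j => A (Fin.last n) (Fin.castSucc j) with hcdef
    have hb : ∀ i, b i ≤ 0 := fun i => hZ _ _ (Fin.castSucc_lt_last i).ne
    have hc : ∀ j, c j ≤ 0 := fun j => hZ _ _ (Fin.castSucc_lt_last j).ne'
    obtain ⟨w, hw0, hww⟩ := ih D hDZ hDM (fun i => -b i) (fun i => neg_nonneg.2 (hb i))
    obtain ⟨z, hz0, hzz⟩ := ih D hDZ hDM (fun i => y (Fin.castSucc i)) (fun i => hy _)
    have hww' : D.mulVec w = fun i => -(A (Fin.castSucc i) (Fin.last n)) := hww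
    have hdetA := det_eq_schur A w hDdet.ne' hww'
    set s : ℝ := A (Fin.last n) (Fin.last n)
        + (fun j => A (Fin.last n) (Fin.castSucc j)) ⬝ᵥ w with hsdef
    have hApos : 0 < A.det := by
      have := hM (n+1) (le_refl (n+1))
      have he : A.submatrix (Fin.castLE (le_refl (n+1))) (Fin.castLE (le_refl (n+1))) = A := by
        ext i j; rfl
      rwa [he] at this
    have hs : 0 < s := by
      have hprod : 0 < D.det * s := by rw [← hdetA]; exact hApos
      nlinarith [hprod, hDdet]
    have hcz : c ⬝ᵥ z ≤ 0 :=
      Finset.sum_nonpos fun j _ => mul_nonpos_of_nonpos_of_nonneg (hc j) (hz0 j)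
    set xk : ℝ := (y (Fin.last n) - c ⬝ᵥ z) / s with hxkdef
    have hxk0 : 0 ≤ xk := div_nonneg (by linarith [hy (Fin.last n)]) hs.le
    set x' : Fin n → ℝ := fun i => z i + xk * w i with hx'def
    set x : Fin (n+1) → ℝ := Fin.snoc x' xk with hxdef
    have hx0 : ∀ i, 0 ≤ x i := by
      intro i
      refine Fin.lastCases ?_ (fun i₀ => ?_) i
      · simp [hxdef, Fin.snoc_last, hxk0]
      · simp only [hxdef, Fin.snoc_castSucc, hx'def]
        have := mul_nonneg hxk0 (hw0 i₀)
        linarith [hz0 i₀]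
    refine ⟨x, hx0, ?_⟩
    have key : ∀ i : Fin (n+1), A.mulVec x i
        = (∑ j : Fin n, A i (Fin.castSucc j) * (z j + xk * w j)) + A i (Fin.last n) * xk := by
      intro i
      have h0 : A.mulVec x i = ∑ j, A i j * x j := by simp [Matrix.mulVec, dotProduct]
      rw [h0, Fin.sum_univ_castSucc]
      congr 1
      · refine Finset.sum_congr rfl fun j _ => ?_
        rw [show x (Fin.castSucc j) = z j + xk * w j from by
          simp [hxdef, Fin.snoc_castSucc, hx'def]]
      · rw [show x (Fin.last n) = xk from by simp [hxdef, Fin.snoc_last]]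
    refine funext fun i => ?_
    refine Fin.lastCases ?_ (fun i₀ => ?_) i
    · rw [key]
      have hexp : ∑ j : Fin n, A (Fin.last n) (Fin.castSucc j) * (z j + xk * w j)
          = c ⬝ᵥ z + xk * (c ⬝ᵥ w) := by
        simp only [dotProduct, Finset.mul_sum]
        rw [← Finset.sum_add_distrib]
        exact Finset.sum_congr rfl fun j _ => by simp only [hcdef]; ring
      rw [hexp]
      have hxks : xk * s = y (Fin.last n) - c ⬝ᵥ z := by
        rw [hxkdef]; field_simp
      rw [hsdef] at hxks
      have hcc : (fun j => A (Fin.last n) (Fin.castSucc j)) ⬝ᵥ w = c ⬝ᵥ w := rfl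
      rw [hcc] at hxks
      linarith [hxks, mul_add xk (A (Fin.last n) (Fin.last n)) (c ⬝ᵥ w)]
    · rw [key]
      have hexp : ∑ j : Fin n, A (Fin.castSucc i₀) (Fin.castSucc j) * (z j + xk * w j)
          = D.mulVec z i₀ + xk * D.mulVec w i₀ := by
        simp only [Matrix.mulVec, dotProduct, hDdef, Matrix.submatrix_apply, Finset.mul_sum]
        rw [← Finset.sum_add_distrib]
        exact Finset.sum_congr rfl fun j _ => by ring
      rw [hexp, hzz, hww]
      simp only [hbdef]
      ring

lemma pos_sol {m : ℕ} (A : Matrix (Fin m) (Fin m) ℝ) (hZ : IsZ A) (hM : LeadingMinorsPos A) :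
    ∃ x : Fin m → ℝ, (∀ i, 0 < x i) ∧ ∀ i, 0 < A.mulVec x i := by
  obtain ⟨x, hx0, hx⟩ := solve_nonneg m A hZ hM (fun _ => 1) (fun _ => zero_le_one)
  refine ⟨x, fun i => ?_, fun i => by rw [hx]; norm_num⟩
  rcases (hx0 i).lt_or_eq with h | h
  · exact h
  · exfalso
    have h1 : A.mulVec x i = 1 := by rw [hx]
    have h2 : A.mulVec x i ≤ 0 := by
      have : A.mulVec x i = ∑ j, A i j * x j := by simp [Matrix.mulVec, dotProduct]
      rw [this]
      refine Finset.sum_nonpos fun j _ => ?_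
      by_cases hji : j = i
      · subst hji; rw [← h]; simp
      · exact mul_nonpos_of_nonpos_of_nonneg (hZ i j (Ne.symm hji)) (hx0 j)
    linarith

lemma eval_charpoly_det {m : ℕ} {R : Type*} [CommRing R] (A : Matrix (Fin m) (Fin m) R) (z : R) :
    A.charpoly.eval z = (z • (1 : Matrix (Fin m) (Fin m) R) - A).det := by
  rw [Matrix.charpoly, ← Polynomial.coe_evalRingHom, RingHom.map_det]
  congr 1
  ext i j
  by_cases h : i = j <;>
    simp [charmatrix_apply, h, Matrix.one_apply, Matrix.smul_apply, Matrix.diagonal_apply]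

lemma aeval_charpoly_det {m : ℕ} (A : Matrix (Fin m) (Fin m) ℝ) (z : ℂ) :
    Polynomial.aeval z A.charpoly
      = (z • (1 : Matrix (Fin m) (Fin m) ℂ) - A.map (algebraMap ℝ ℂ)).det := by
  rw [Polynomial.aeval_def, ← Polynomial.eval_map, ← Matrix.charpoly_map A (algebraMap ℝ ℂ),
    eval_charpoly_det]

lemma gershgorin {m : ℕ} (A : Matrix (Fin m) (Fin m) ℝ)
    (x : Fin m → ℝ) (hx : ∀ i, 0 < x i)
    (hdom : ∀ i, ∑ j ∈ univ.erase i, |A i j| * x j < A i i * x i)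
    (z : ℂ) (hz : (z • (1 : Matrix (Fin m) (Fin m) ℂ) - A.map (algebraMap ℝ ℂ)).det = 0) :
    0 < z.re := by
  classical
  obtain ⟨v, hv0, hv⟩ := (Matrix.exists_mulVec_eq_zero_iff).2 hz
  have hAv : (A.map (algebraMap ℝ ℂ)).mulVec v = z • v := by
    have h1 : (z • (1 : Matrix (Fin m) (Fin m) ℂ)).mulVec v
        - (A.map (algebraMap ℝ ℂ)).mulVec v = 0 := by
      rw [← Matrix.sub_mulVec]; exact hv
    have h2 : (z • (1 : Matrix (Fin m) (Fin m) ℂ)).mulVec v = z • v := by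
      rw [Matrix.smul_mulVec, Matrix.one_mulVec]
    rw [h2] at h1
    exact (sub_eq_zero.mp h1).symm
  obtain ⟨i₀, hi₀⟩ : ∃ i, v i ≠ 0 := by
    by_contra h; push_neg at h; exact hv0 (funext h)
  obtain ⟨i, -, hi⟩ := Finset.exists_max_image univ (fun j => ‖v j‖ / x j) ⟨i₀, mem_univ i₀⟩
  set r := ‖v i‖ / x i with hr
  have hrpos : 0 < r :=
    lt_of_lt_of_le (div_pos (norm_pos_iff.2 hi₀) (hx i₀)) (hi i₀ (mem_univ i₀))
  have hvi : ‖v i‖ = r * x i := by rw [hr, div_mul_cancel₀]; exact (hx i).ne'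
  have hvj : ∀ j, ‖v j‖ ≤ r * x j := by
    intro j
    have := hi j (mem_univ j)
    rw [div_le_iff₀ (hx j)] at this
    linarith
  have hrow : ∑ j, (algebraMap ℝ ℂ) (A i j) * v j = z * v i := by
    have := congrFun hAv i
    simpa [Matrix.mulVec, dotProduct, Matrix.map_apply] using this
  have hsplit : (z - (A i i : ℂ)) * v i = ∑ j ∈ univ.erase i, (A i j : ℂ) * v j := by
    have h1 : (A i i : ℂ) * v i + ∑ j ∈ univ.erase i, (A i j : ℂ) * v j = z * v i := by
      rw [Finset.add_sum_erase univ (fun j => (A i j : ℂ) * v j) (mem_univ i)]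
      simpa using hrow
    linear_combination -h1
  have hAipos : 0 < A i i := diag_pos A x hx hdom i
  have hlt : ‖z - (A i i : ℂ)‖ * ‖v i‖ < A i i * ‖v i‖ := by
    calc ‖z - (A i i : ℂ)‖ * ‖v i‖ = ‖(z - (A i i : ℂ)) * v i‖ := (norm_mul _ _).symm
    _ = ‖∑ j ∈ univ.erase i, (A i j : ℂ) * v j‖ := by rw [hsplit]
    _ ≤ ∑ j ∈ univ.erase i, ‖(A i j : ℂ) * v j‖ := norm_sum_le _ _
    _ = ∑ j ∈ univ.erase i, |A i j| * ‖v j‖ := by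
        refine Finset.sum_congr rfl fun j _ => ?_
        rw [norm_mul, Complex.norm_real, Real.norm_eq_abs]
    _ ≤ ∑ j ∈ univ.erase i, |A i j| * (r * x j) := by
        refine Finset.sum_le_sum fun j _ => ?_
        exact mul_le_mul_of_nonneg_left (hvj j) (abs_nonneg _)
    _ = r * ∑ j ∈ univ.erase i, |A i j| * x j := by
        rw [Finset.mul_sum]; exact Finset.sum_congr rfl fun j _ => by ring
    _ < r * (A i i * x i) := (mul_lt_mul_iff_right₀ hrpos).2 (hdom i)
    _ = A i i * ‖v i‖ := by rw [hvi]; ring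
  have hvipos : 0 < ‖v i‖ := by rw [hvi]; exact mul_pos hrpos (hx i)
  have habs : ‖z - (A i i : ℂ)‖ < A i i := by
    have := (mul_lt_mul_iff_left₀ hvipos).1 hlt
    exact this
  have hsq : (z.re - A i i)^2 + z.im^2 < (A i i)^2 := by
    have h1 : ‖z - (A i i : ℂ)‖^2 = (z.re - A i i)^2 + z.im^2 := by
      rw [Complex.sq_norm, Complex.normSq_apply]
      simp [Complex.sub_re, Complex.sub_im, Complex.ofReal_re, Complex.ofReal_im]
      ring
    nlinarith [norm_nonneg (z - (A i i : ℂ))]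
  nlinarith [sq_nonneg z.im]

attribute [local instance] Matrix.linftyOpNormedRing Matrix.linftyOpNormedAlgebra

set_option maxHeartbeats 1000000 in
lemma exists_bad_eigen {m : ℕ} (M : Matrix (Fin m) (Fin m) ℝ) (hZ : IsZ M)
    (u : Fin m → ℝ) (hu0 : ∀ i, 0 ≤ u i) (i₀ : Fin m) (hui₀ : 0 < u i₀)
    (hMu : ∀ i, M.mulVec u i ≤ 0) :
    ∃ z : ℂ, (z • (1 : Matrix (Fin m) (Fin m) ℂ) - M.map (algebraMap ℝ ℂ)).det = 0
      ∧ z.re ≤ 0 := by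
  classical
  by_contra hcon
  push_neg at hcon
  -- hcon : ∀ z, det (z•1 - Mc) = 0 → 0 < z.re
  set φ : ℝ →+* ℂ := (algebraMap ℝ ℂ) with hφ
  have hφs : ∀ x : ℝ, φ x = (x:ℂ) := fun x => rfl
  set Mc : Matrix (Fin m) (Fin m) ℂ := M.map φ with hMc
  haveI : CompleteSpace (Matrix (Fin m) (Fin m) ℂ) :=
    FiniteDimensional.complete ℂ (Matrix (Fin m) (Fin m) ℂ)
  -- the finset of eigenvalues
  set R : Finset ℂ := Mc.charpoly.roots.toFinset with hR
  have hchar_ne : Mc.charpoly ≠ 0 := (Matrix.charpoly_monic Mc).ne_zero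
  have hmem : ∀ z : ℂ, z ∈ R ↔ (z • (1 : Matrix (Fin m) (Fin m) ℂ) - Mc).det = 0 := by
    intro z
    rw [hR, Multiset.mem_toFinset, Polynomial.mem_roots hchar_ne, Polynomial.IsRoot,
      eval_charpoly_det]
  have hcard : 0 < m := i₀.pos
  have hRne : R.Nonempty := by
    have hdeg : 0 < Mc.charpoly.degree := by
      rw [Matrix.charpoly_degree_eq_dim]
      simpa using hcard
    obtain ⟨z, hz⟩ := Complex.exists_root hdeg
    exact ⟨z, by rw [hR, Multiset.mem_toFinset, Polynomial.mem_roots hchar_ne]; exact hz⟩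
  have hRpos : ∀ z ∈ R, 0 < z.re := fun z hz => hcon z ((hmem z).1 hz)
  -- min real part and max normSq over the eigenvalues
  obtain ⟨zr, hzrR, hzr⟩ := Finset.exists_min_image R Complex.re hRne
  obtain ⟨zK, hzKR, hzK⟩ := Finset.exists_max_image R Complex.normSq hRne
  set r : ℝ := zr.re with hrdef
  set K : ℝ := Complex.normSq zK with hKdef
  have hrpos : 0 < r := hRpos zr hzrR
  have hKr : r^2 ≤ K := by
    have h1 : r ≤ zr.re := le_refl _
    have h2 : zr.re^2 ≤ Complex.normSq zr := by
      rw [Complex.normSq_apply]; nlinarith [sq_nonneg zr.im]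
    have h3 : Complex.normSq zr ≤ K := hzK zr hzrR
    nlinarith
  -- choose s large
  set dmax : ℝ := ∑ i, |M i i| with hdmax
  have hdm : ∀ i, M i i ≤ dmax := by
    intro i
    calc M i i ≤ |M i i| := le_abs_self _
    _ ≤ ∑ j, |M j j| := Finset.single_le_sum (f := fun j => |M j j|) (fun j _ => abs_nonneg _) (mem_univ i)
  set s : ℝ := max (max 1 dmax) (1 + K / (2 * r)) with hsdef
  have hs1 : 1 ≤ s := le_trans (le_max_left 1 dmax) (le_max_left _ _)
  have hspos : 0 < s := lt_of_lt_of_le one_pos hs1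
  have hsd : ∀ i, M i i ≤ s := fun i => le_trans (hdm i) (le_trans (le_max_right 1 dmax) (le_max_left _ _))
  have hsK : K < 2 * s * r := by
    have h1 : 1 + K / (2 * r) ≤ s := le_max_right _ _
    have h2 : K / (2 * r) < s := by linarith
    rw [div_lt_iff₀ (by linarith)] at h2
    linarith
  -- the nonnegative matrix B
  set B : Matrix (Fin m) (Fin m) ℝ := s • (1 : Matrix (Fin m) (Fin m) ℝ) - M with hBdef
  have hB0 : ∀ i j, 0 ≤ B i j := by
    intro i j
    by_cases h : i = j
    · subst h; simp [hBdef, Matrix.one_apply]; linarith [hsd i]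
    · simp only [hBdef, Matrix.sub_apply, Matrix.smul_apply, Matrix.one_apply_ne h,
        smul_eq_mul, mul_zero, zero_sub, neg_nonneg]
      exact hZ i j h
  have hBu : ∀ i, s * u i ≤ B.mulVec u i := by
    intro i
    have h1 : B.mulVec u i = s * u i - M.mulVec u i := by
      rw [hBdef, Matrix.sub_mulVec, Matrix.smul_mulVec, Matrix.one_mulVec]
      simp [Pi.smul_apply, smul_eq_mul]
    rw [h1]; linarith [hMu i]
  have hBw : ∀ (P : Matrix (Fin m) (Fin m) ℝ) (v : Fin m → ℝ) i,
      P.mulVec v i = ∑ j, P i j * v j := by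
    intro P v i; simp [Matrix.mulVec, dotProduct]
  have hBn : ∀ n : ℕ, (∀ i, 0 ≤ (B^n).mulVec u i) ∧ (∀ i, s^n * u i ≤ (B^n).mulVec u i) := by
    intro n
    induction n with
    | zero =>
      refine ⟨fun i => ?_, fun i => ?_⟩
      · simpa [Matrix.one_mulVec] using hu0 i
      · simp [Matrix.one_mulVec]
    | succ n ihn =>
      obtain ⟨ih0, ih1⟩ := ihn
      have hpow : (B^(n+1)).mulVec u = B.mulVec ((B^n).mulVec u) := by
        rw [pow_succ', Matrix.mulVec_mulVec]
      have hBpownn : ∀ i, 0 ≤ (B^n) i i ∨ True := fun _ => Or.inr trivial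
      constructor
      · intro i
        rw [hpow, hBw]
        exact Finset.sum_nonneg fun j _ => mul_nonneg (hB0 i j) (ih0 j)
      · intro i
        rw [hpow, hBw]
        have hmono : ∑ j, B i j * (s^n * u j) ≤ ∑ j, B i j * ((B^n).mulVec u j) :=
          Finset.sum_le_sum fun j _ => mul_le_mul_of_nonneg_left (ih1 j) (hB0 i j)
        refine le_trans ?_ hmono
        have heq : ∑ j, B i j * (s^n * u j) = s^n * B.mulVec u i := by
          rw [hBw, Finset.mul_sum]; exact Finset.sum_congr rfl fun j _ => by ring
        rw [heq]
        have hsn : (0:ℝ) ≤ s^n := pow_nonneg hspos.le n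
        calc s^(n+1) * u i = s^n * (s * u i) := by ring
        _ ≤ s^n * B.mulVec u i := mul_le_mul_of_nonneg_left (hBu i) hsn
  set U : ℝ := ∑ j, u j with hU
  have hUpos : 0 < U :=
    lt_of_lt_of_le hui₀ (Finset.single_le_sum (fun j _ => hu0 j) (mem_univ i₀))
  have huU : ∀ j, u j ≤ U := fun j => Finset.single_le_sum (fun j _ => hu0 j) (mem_univ j)
  set Bc : Matrix (Fin m) (Fin m) ℂ := B.map φ with hBc
  have hBcpow : ∀ n : ℕ, Bc ^ n = (B ^ n).map φ := by
    intro n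
    rw [hBc, ← RingHom.mapMatrix_apply, ← RingHom.mapMatrix_apply, ← map_pow]
  have hnormB : ∀ n : ℕ, s^n * (u i₀ / U) ≤ ‖Bc ^ n‖ := by
    intro n
    have h1 : s^n * u i₀ ≤ (B^n).mulVec u i₀ := (hBn n).2 i₀
    have h2 : (B^n).mulVec u i₀ ≤ (∑ j, |(B^n) i₀ j|) * U := by
      rw [hBw, Finset.sum_mul]
      refine Finset.sum_le_sum fun j _ => ?_
      calc (B^n) i₀ j * u j ≤ |(B^n) i₀ j| * u j :=
        mul_le_mul_of_nonneg_right (le_abs_self _) (hu0 j)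
      _ ≤ |(B^n) i₀ j| * U := mul_le_mul_of_nonneg_left (huU j) (abs_nonneg _)
    have h3 : (∑ j, ‖(Bc^n) i₀ j‖) ≤ ‖Bc ^ n‖ := by
      have hrow : (∑ j, ‖(Bc^n) i₀ j‖₊) ≤ ‖Bc^n‖₊ := by
        rw [Matrix.linfty_opNNNorm_def]
        exact Finset.le_sup (f := fun i => ∑ j, ‖(Bc^n) i j‖₊) (Finset.mem_univ i₀)
      have hc := NNReal.coe_le_coe.2 hrow
      simpa [NNReal.coe_sum, coe_nnnorm] using hc
    have h4 : ∀ j, ‖(Bc^n) i₀ j‖ = |(B^n) i₀ j| := by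
      intro j
      rw [hBcpow n, Matrix.map_apply]
      rw [show φ ((B^n) i₀ j) = ((((B^n) i₀ j) : ℝ) : ℂ) from rfl]
      rw [Complex.norm_real, Real.norm_eq_abs]
    have h5 : s^n * u i₀ ≤ ‖Bc^n‖ * U := by
      refine h1.trans (h2.trans ?_)
      rw [show (∑ j, |(B^n) i₀ j|) = ∑ j, ‖(Bc^n) i₀ j‖ from
        (Finset.sum_congr rfl fun j _ => (h4 j).symm)]
      exact mul_le_mul_of_nonneg_right h3 hUpos.le
    rw [mul_comm (s^n) (u i₀ / U), div_mul_eq_mul_div, div_le_iff₀ hUpos]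
    nlinarith [h5]
  set s' : ℝ := Real.sqrt (s^2 - 2*s*r + K) with hs'
  have hnn : 0 ≤ s^2 - 2*s*r + K := by nlinarith [sq_nonneg (s - r), hKr]
  have hs'sq : s'^2 = s^2 - 2*s*r + K := Real.sq_sqrt hnn
  have hs'nonneg : 0 ≤ s' := Real.sqrt_nonneg _
  have hs's : s' < s := by nlinarith [hs'sq, hsK, hs'nonneg, hspos]
  have hBc_eq : Bc = (s:ℂ) • (1 : Matrix (Fin m) (Fin m) ℂ) - Mc := by
    ext i j
    by_cases h : i = j <;>
      simp [hBc, hBdef, hMc, Matrix.one_apply, h, Matrix.map_apply, Matrix.sub_apply, hφs] <;>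
        push_cast <;> ring
  have hspec : ∀ w : ℂ, w ∈ spectrum ℂ Bc → ‖w‖ ≤ s' := by
    intro w hw
    have hdet0 : (w • (1 : Matrix (Fin m) (Fin m) ℂ) - Bc).det = 0 := by
      rw [spectrum.mem_iff] at hw
      by_contra hne
      apply hw
      have h1 : IsUnit (w • (1 : Matrix (Fin m) (Fin m) ℂ) - Bc).det := isUnit_iff_ne_zero.2 hne
      have h2 := (Matrix.isUnit_iff_isUnit_det _).2 h1
      convert h2 using 2
      rw [Algebra.algebraMap_eq_smul_one]
    set lam : ℂ := (s:ℂ) - w with hlam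
    have hdetlam : (lam • (1 : Matrix (Fin m) (Fin m) ℂ) - Mc).det = 0 := by
      have h1 : w • (1 : Matrix (Fin m) (Fin m) ℂ) - Bc
          = -(lam • (1 : Matrix (Fin m) (Fin m) ℂ) - Mc) := by
        rw [hBc_eq, hlam]
        ext i j
        by_cases h : i = j <;>
          simp [Matrix.one_apply, Matrix.sub_apply, Matrix.smul_apply, h] <;> ring
      rw [h1, Matrix.det_neg] at hdet0
      have h2 : ((-1:ℂ))^(Fintype.card (Fin m)) ≠ 0 := pow_ne_zero _ (by norm_num)
      exact (mul_eq_zero.1 hdet0).resolve_left h2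
    have hlamR : lam ∈ R := (hmem lam).2 hdetlam
    have h1 : r ≤ lam.re := hzr lam hlamR
    have h2 : Complex.normSq lam ≤ K := hzK lam hlamR
    have hw2 : ‖w‖^2 = s^2 - 2*s*lam.re + Complex.normSq lam := by
      have hwl : w = (s:ℂ) - lam := by rw [hlam]; ring
      rw [hwl, Complex.sq_norm, Complex.normSq_apply, Complex.normSq_apply]
      simp [Complex.sub_re, Complex.sub_im]
      ring
    nlinarith [norm_nonneg w, hs'sq, hspos, hs'nonneg]
  have hrho : spectralRadius ℂ Bc ≤ ENNReal.ofReal s' := by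
    rw [spectralRadius]
    refine iSup₂_le fun w hw => ?_
    rw [← ENNReal.ofReal_coe_nnreal, coe_nnnorm]
    exact ENNReal.ofReal_le_ofReal (hspec w hw)
  set s'' : ℝ := (s' + s)/2 with hs''
  have hs''pos : 0 < s'' := by rw [hs'']; linarith
  have hs''l : s' < s'' := by rw [hs'']; linarith
  have hs''r : s'' < s := by rw [hs'']; linarith
  have hT := spectrum.pow_nnnorm_pow_one_div_tendsto_nhds_spectralRadius Bc
  have hev1 : ∀ᶠ n : ℕ in atTop, (‖Bc ^ n‖₊ : ENNReal) ^ (1/(n:ℝ)) < ENNReal.ofReal s'' := by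
    have hlt : spectralRadius ℂ Bc < ENNReal.ofReal s'' :=
      lt_of_le_of_lt hrho (by rw [ENNReal.ofReal_lt_ofReal_iff hs''pos]; exact hs''l)
    exact hT.eventually_lt_const hlt
  have hev2 : ∀ᶠ n : ℕ in atTop, ‖Bc ^ n‖ < s''^n := by
    filter_upwards [hev1, eventually_ge_atTop 1] with n hn hn1
    have hne : (n:ℝ) ≠ 0 := by
      have : (1:ℝ) ≤ (n:ℝ) := by exact_mod_cast hn1
      linarith
    have h1 : (((‖Bc ^ n‖₊ : ENNReal) ^ (1/(n:ℝ))) ^ (n:ℝ))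
        < (ENNReal.ofReal s'') ^ (n:ℝ) := by
      refine ENNReal.rpow_lt_rpow hn ?_
      positivity
    rw [← ENNReal.rpow_mul, one_div, inv_mul_cancel₀ hne, ENNReal.rpow_one] at h1
    rw [ENNReal.ofReal_rpow_of_pos hs''pos, Real.rpow_natCast] at h1
    rw [← ENNReal.ofReal_coe_nnreal, coe_nnnorm] at h1
    have hpos : (0:ℝ) < s''^n := pow_pos hs''pos n
    exact (ENNReal.ofReal_lt_ofReal_iff hpos).1 h1
  have hev3 : ∀ᶠ n : ℕ in atTop, (s''/s)^n < u i₀ / U := by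
    have htend : Tendsto (fun n : ℕ => (s''/s)^n) atTop (𝓝 0) :=
      tendsto_pow_atTop_nhds_zero_of_lt_one (by positivity)
        (by rw [div_lt_one hspos]; exact hs''r)
    exact htend.eventually_lt_const (div_pos hui₀ hUpos)
  obtain ⟨n, hn2, hn3⟩ := (hev2.and hev3).exists
  have hlow := hnormB n
  have hsn : (0:ℝ) < s^n := pow_pos hspos n
  rw [div_pow, div_lt_iff₀ hsn] at hn3
  nlinarith [hlow, hn2, hn3]

set_option maxHeartbeats 1000000 in
lemma converse {m : ℕ} (C : Matrix (Fin m) (Fin m) ℝ) (hZ : IsZ C)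
    (hroots : ∀ z : ℂ,
      (z • (1 : Matrix (Fin m) (Fin m) ℂ) - C.map (algebraMap ℝ ℂ)).det = 0 → 0 < z.re) :
    LeadingMinorsPos C := by
  classical
  by_contra hP0
  have hm : 0 < m := by
    rcases Nat.eq_zero_or_pos m with h | h
    · exfalso
      apply hP0
      intro k hk
      have hk0 : k = 0 := by omega
      subst hk0
      rw [Matrix.det_isEmpty]
      exact one_pos
    · exact h
  set A : ℝ → Matrix (Fin m) (Fin m) ℝ :=
    fun t => C + t • (1 : Matrix (Fin m) (Fin m) ℝ) with hA
  have hAZ : ∀ t, IsZ (A t) := by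
    intro t i j hij
    simp only [hA, Matrix.add_apply, Matrix.smul_apply, Matrix.one_apply_ne hij, smul_eq_mul,
      mul_zero, add_zero]
    exact hZ i j hij
  have hA0 : A 0 = C := by simp [hA]
  set T₀ : ℝ := 1 + ∑ i, ∑ j, |C i j| with hT₀
  have hT0 : ∀ t, T₀ ≤ t → LeadingMinorsPos (A t) := by
    intro t ht
    refine minorsPos_of_pos_vec (A t) (hAZ t) (fun _ => 1) (fun _ => one_pos) ?_
    intro i
    have h1 : (A t).mulVec (fun _ => 1) i = (∑ j, C i j) + t := by
      have h0 : (A t).mulVec (fun _ => 1) i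
          = ∑ j, (C i j + t * (1 : Matrix (Fin m) (Fin m) ℝ) i j) := by
        simp [hA, Matrix.mulVec, dotProduct, Matrix.add_apply, Matrix.smul_apply]
      rw [h0, Finset.sum_add_distrib]
      congr 1
      simp [Matrix.one_apply, mul_ite, Finset.sum_ite_eq]
    have h2 : -(∑ j, |C i j|) ≤ ∑ j, C i j := by
      rw [← Finset.sum_neg_distrib]
      exact Finset.sum_le_sum fun j _ => neg_abs_le _
    have h3 : ∑ j, |C i j| ≤ ∑ i', ∑ j, |C i' j| :=
      Finset.single_le_sum (f := fun i' => ∑ j, |C i' j|)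
        (fun i' _ => Finset.sum_nonneg fun j _ => abs_nonneg _) (mem_univ i)
    rw [h1]
    rw [hT₀] at ht
    linarith
  set U : Set ℝ := {t | 0 ≤ t ∧ ¬ LeadingMinorsPos (A t)} with hUdef
  have hU0 : (0:ℝ) ∈ U := ⟨le_refl 0, by rwa [hA0]⟩
  have hUbdd : BddAbove U := by
    refine ⟨T₀, fun t ht => ?_⟩
    by_contra hc
    push_neg at hc
    exact ht.2 (hT0 t hc.le)
  set τ := sSup U with hτ
  have hτ0 : 0 ≤ τ := le_csSup hUbdd hU0
  have hPgt : ∀ t, τ < t → LeadingMinorsPos (A t) := by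
    intro t ht
    by_contra hc
    have h1 : t ∈ U := ⟨hτ0.trans ht.le, hc⟩
    exact (le_csSup hUbdd h1).not_gt ht
  have hminor_nonneg : ∀ (k : ℕ) (hk : k ≤ m),
      0 ≤ ((A τ).submatrix (Fin.castLE hk) (Fin.castLE hk)).det := by
    intro k hk
    set f : ℝ → ℝ := fun t => ((A t).submatrix (Fin.castLE hk) (Fin.castLE hk)).det with hf
    have hfc : Continuous f := by
      refine Continuous.matrix_det (continuous_matrix fun i j => ?_)
      simp only [hf, hA, Matrix.submatrix_apply, Matrix.add_apply, Matrix.smul_apply, smul_eq_mul]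
      exact continuous_const.add (continuous_id.mul continuous_const)
    have htend : Filter.Tendsto f (𝓝[>] τ) (𝓝 (f τ)) := (hfc.continuousAt).continuousWithinAt
    refine ge_of_tendsto htend ?_
    filter_upwards [self_mem_nhdsWithin] with t ht
    exact (hPgt t ht k hk).le
  have hnPτ : ¬ LeadingMinorsPos (A τ) := by
    intro hPτ
    obtain ⟨x, hx, hAx⟩ := pos_sol (A τ) (hAZ τ) hPτ
    obtain ⟨iδ, -, hδ⟩ := Finset.exists_min_image univ (fun i => (A τ).mulVec x i)
      ⟨⟨0, hm⟩, mem_univ _⟩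
    obtain ⟨iX, -, hXmax⟩ := Finset.exists_max_image univ x ⟨⟨0, hm⟩, mem_univ _⟩
    set δ : ℝ := (A τ).mulVec x iδ with hδdef
    set X : ℝ := x iX with hXdef
    have hδpos : 0 < δ := hAx iδ
    have hXpos : 0 < X := hx iX
    set ε : ℝ := δ / (2 * X) with hεdef
    have hεpos : 0 < ε := by positivity
    obtain ⟨u', hu'U, hu'⟩ := exists_lt_of_lt_csSup ⟨0, hU0⟩ (show τ - ε < τ by linarith)
    have hu'le : u' ≤ τ := le_csSup hUbdd hu'U
    apply hu'U.2
    refine minorsPos_of_pos_vec (A u') (hAZ u') x hx ?_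
    intro i
    have hlin : ∀ t, (A t).mulVec x i = C.mulVec x i + t * x i := by
      intro t
      simp [hA, Matrix.add_mulVec, Matrix.smul_mulVec, Matrix.one_mulVec]
    have hdiff : (A u').mulVec x i = (A τ).mulVec x i + (u' - τ) * x i := by
      rw [hlin u', hlin τ]; ring
    rw [hdiff]
    have h2 : δ ≤ (A τ).mulVec x i := hδ i (mem_univ i)
    have h3 : x i ≤ X := hXmax i (mem_univ i)
    have hεX : ε * X = δ / 2 := by
      rw [hεdef]; field_simp
    nlinarith [hx i, hu'le, hu', h2, h3, hεX]
  set P : ℕ → Prop := fun k =>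
    ∃ hk : k ≤ m, ((A τ).submatrix (Fin.castLE hk) (Fin.castLE hk)).det ≤ 0 with hPdef
  haveI : DecidablePred P := Classical.decPred _
  have hex : ∃ k, P k := by
    by_contra hc
    push_neg at hc
    apply hnPτ
    intro k hk
    rcases lt_or_ge 0 (((A τ).submatrix (Fin.castLE hk) (Fin.castLE hk)).det) with h | h
    · exact h
    · exact absurd ⟨hk, h⟩ (hc k)
  obtain ⟨hfm, hfle⟩ := Nat.find_spec hex
  have hfmin : ∀ j, j < Nat.find hex → ∀ hjm : j ≤ m,
      0 < ((A τ).submatrix (Fin.castLE hjm) (Fin.castLE hjm)).det := by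
    intro j hj hjm
    have hnj := Nat.find_min hex hj
    rcases lt_or_ge 0 (((A τ).submatrix (Fin.castLE hjm) (Fin.castLE hjm)).det) with h | h
    · exact h
    · exact absurd ⟨hjm, h⟩ hnj
  have hfeq : ((A τ).submatrix (Fin.castLE hfm) (Fin.castLE hfm)).det = 0 :=
    le_antisymm hfle (hminor_nonneg _ hfm)
  have hfpos : 0 < Nat.find hex := by
    rcases Nat.eq_zero_or_pos (Nat.find hex) with h | h
    · exfalso
      have h1 : ((A τ).submatrix (Fin.castLE hfm) (Fin.castLE hfm)).det = 1 := by
        have : IsEmpty (Fin (Nat.find hex)) := by rw [h]; infer_instance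
        exact Matrix.det_isEmpty
      rw [h1] at hfle
      linarith
    · exact h
  obtain ⟨k₀, hk₀m, hk₀pos, hk₀eq, hk₀min⟩ :
      ∃ k₁, ∃ hk₁m : k₁ ≤ m, 0 < k₁ ∧
        ((A τ).submatrix (Fin.castLE hk₁m) (Fin.castLE hk₁m)).det = 0 ∧
        ∀ j, j < k₁ → ∀ hjm : j ≤ m,
          0 < ((A τ).submatrix (Fin.castLE hjm) (Fin.castLE hjm)).det :=
    ⟨Nat.find hex, hfm, hfpos, hfeq, hfmin⟩
  obtain ⟨j₀, hj₀⟩ : ∃ j₀, k₀ = j₀ + 1 := ⟨k₀ - 1, (Nat.succ_pred_eq_of_pos hk₀pos).symm⟩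
  subst hj₀
  have hj₀m : j₀ ≤ m := by omega
  set Mm := A τ with hMm
  set Mk := Mm.submatrix (Fin.castLE hk₀m) (Fin.castLE hk₀m) with hMk
  have hMkZ : IsZ Mk := fun i j hij => hAZ τ _ _ (fun h => hij (Fin.castLE_injective _ h))
  set D := Mk.submatrix Fin.castSucc Fin.castSucc with hD
  have hDZ : IsZ D := fun i j hij => hMkZ _ _ (fun h => hij (Fin.castSucc_injective _ h))
  have hDM : LeadingMinorsPos D := by
    intro i hi
    have him : i ≤ m := by omega
    have heq : D.submatrix (Fin.castLE hi) (Fin.castLE hi)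
        = Mm.submatrix (Fin.castLE him) (Fin.castLE him) := rfl
    rw [heq]
    exact hk₀min i (by omega) him
  have hDdet : 0 < D.det := by
    have heq : D = Mm.submatrix (Fin.castLE hj₀m) (Fin.castLE hj₀m) := rfl
    rw [heq]
    exact hk₀min j₀ (by omega) hj₀m
  set b : Fin j₀ → ℝ := fun i => Mk (Fin.castSucc i) (Fin.last j₀) with hb
  have hbneg : ∀ i, 0 ≤ -b i := fun i => neg_nonneg.2 (hMkZ _ _ (Fin.castSucc_lt_last i).ne)
  obtain ⟨w, hw0, hww⟩ := solve_nonneg j₀ D hDZ hDM (fun i => -b i) hbneg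
  have hschur := det_eq_schur Mk w hDdet.ne' hww
  have hMkdet : Mk.det = 0 := hk₀eq
  have hs0 : Mk (Fin.last j₀) (Fin.last j₀)
      + (fun j => Mk (Fin.last j₀) (Fin.castSucc j)) ⬝ᵥ w = 0 := by
    rw [hMkdet] at hschur
    rcases mul_eq_zero.1 hschur.symm with h | h
    · exact absurd h hDdet.ne'
    · exact h
  set v : Fin (j₀+1) → ℝ := Fin.snoc w 1 with hv
  have hv0 : ∀ q, 0 ≤ v q := by
    intro q
    refine Fin.lastCases ?_ (fun q₀ => ?_) q
    · simp [hv, Fin.snoc_last]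
    · simp only [hv, Fin.snoc_castSucc]
      exact hw0 q₀
  have hMkv : ∀ q, Mk.mulVec v q = 0 := by
    have hexp : ∀ q, Mk.mulVec v q
        = (∑ j, Mk q (Fin.castSucc j) * w j) + Mk q (Fin.last j₀) * 1 := by
      intro q
      have h0 : Mk.mulVec v q = ∑ j, Mk q j * v j := by simp [Matrix.mulVec, dotProduct]
      rw [h0, Fin.sum_univ_castSucc]
      simp [hv, Fin.snoc_castSucc, Fin.snoc_last]
    intro q
    refine Fin.lastCases ?_ (fun q₀ => ?_) q
    · rw [hexp]
      have h1 : ∑ j, Mk (Fin.last j₀) (Fin.castSucc j) * w j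
          = (fun j => Mk (Fin.last j₀) (Fin.castSucc j)) ⬝ᵥ w := rfl
      rw [h1]
      linarith [hs0]
    · rw [hexp]
      have hDw : ∑ j, Mk (Fin.castSucc q₀) (Fin.castSucc j) * w j = D.mulVec w q₀ := by
        simp [hD, Matrix.mulVec, dotProduct]
      rw [hDw, congrFun hww q₀]
      simp [hb]
  set uu : Fin m → ℝ := fun i => if h : (i:ℕ) < j₀+1 then v ⟨i, h⟩ else 0 with huu
  have huu0 : ∀ i, 0 ≤ uu i := by
    intro i
    rw [huu]
    dsimp only
    split
    · exact hv0 _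
    · exact le_refl 0
  set i₀ : Fin m := Fin.castLE hk₀m (Fin.last j₀) with hi₀
  have huui₀ : uu i₀ = 1 := by
    rw [huu]
    dsimp only
    rw [dif_pos (show ((i₀:ℕ)) < j₀+1 from by simp [hi₀])]
    have h1 : (⟨(i₀:ℕ), by simp [hi₀]⟩ : Fin (j₀+1)) = Fin.last j₀ := by
      apply Fin.ext
      simp [hi₀]
    rw [h1, hv, Fin.snoc_last]
  have huueval : ∀ q : Fin (j₀+1), uu (Fin.castLE hk₀m q) = v q := by
    intro q
    rw [huu]
    dsimp only
    rw [dif_pos (show ((Fin.castLE hk₀m q : Fin m):ℕ) < j₀+1 from q.isLt)]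
    exact congrArg v (Fin.ext rfl)
  have key : ∀ i : Fin m,
      Mm.mulVec uu i = ∑ q : Fin (j₀+1), Mm i (Fin.castLE hk₀m q) * v q := by
    intro i
    have h0 : Mm.mulVec uu i = ∑ j, Mm i j * uu j := by simp [Matrix.mulVec, dotProduct]
    rw [h0]
    have hsub : ∑ j ∈ Finset.image (Fin.castLE hk₀m) univ, Mm i j * uu j
        = ∑ j, Mm i j * uu j := by
      refine Finset.sum_subset (Finset.subset_univ _) ?_
      intro j _ hjnot
      have hj : ¬ ((j:ℕ) < j₀+1) := by
        intro hlt
        exact hjnot (Finset.mem_image.2 ⟨⟨(j:ℕ), hlt⟩, mem_univ _, by apply Fin.ext; rfl⟩)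
      rw [huu]
      dsimp only
      rw [dif_neg hj, mul_zero]
    rw [← hsub, Finset.sum_image (fun a _ c _ h => Fin.castLE_injective _ h)]
    exact Finset.sum_congr rfl fun q _ => by rw [huueval q]
  have hMuu : ∀ i, Mm.mulVec uu i ≤ 0 := by
    intro i
    rw [key]
    by_cases hik : (i:ℕ) < j₀+1
    · have hieq : i = Fin.castLE hk₀m ⟨(i:ℕ), hik⟩ := by apply Fin.ext; rfl
      have h1 : ∑ q : Fin (j₀+1), Mm i (Fin.castLE hk₀m q) * v q
          = Mk.mulVec v ⟨(i:ℕ), hik⟩ := by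
        have hieq' : Fin.castLE hk₀m (⟨(i:ℕ), hik⟩ : Fin (j₀+1)) = i := by apply Fin.ext; rfl
        simp [hMk, Matrix.mulVec, dotProduct, hieq']
      rw [h1, hMkv]
    · refine Finset.sum_nonpos fun q _ => ?_
      have hne : i ≠ Fin.castLE hk₀m q := by
        intro h
        apply hik
        rw [h]
        exact q.isLt
      exact mul_nonpos_of_nonpos_of_nonneg (hAZ τ i _ hne) (hv0 q)
  obtain ⟨z, hzdet, hzre⟩ := exists_bad_eigen Mm (hAZ τ) uu huu0 i₀
    (by rw [huui₀]; norm_num) hMuu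
  have htrans : ((z - (τ:ℂ)) • (1 : Matrix (Fin m) (Fin m) ℂ)
      - C.map (algebraMap ℝ ℂ)).det = 0 := by
    have heq : z • (1 : Matrix (Fin m) (Fin m) ℂ) - Mm.map (algebraMap ℝ ℂ)
        = (z - (τ:ℂ)) • (1 : Matrix (Fin m) (Fin m) ℂ) - C.map (algebraMap ℝ ℂ) := by
      ext i j
      by_cases h : i = j <;>
        simp [hMm, hA, Matrix.one_apply, h, Matrix.map_apply, Matrix.add_apply,
          Matrix.smul_apply, Matrix.sub_apply,
          show ∀ x : ℝ, algebraMap ℝ ℂ x = (x:ℂ) from fun x => rfl] <;>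
        push_cast <;> ring
    rw [← heq]
    exact hzdet
  have hfin := hroots (z - (τ:ℂ)) htrans
  rw [Complex.sub_re, Complex.ofReal_re] at hfin
  linarith

end MM

theorem stmt11 (m : ℕ) (C : Matrix (Fin m) (Fin m) ℝ)
    (hoff : ∀ j k : Fin m, j ≠ k → C j k ≤ 0) :
    LeadingMinorsPos C ↔
      ∀ z : ℂ, Polynomial.aeval z (Matrix.charpoly C) = 0 → 0 < z.re := by
  have hZ : MM.IsZ C := hoff
  constructor
  · intro hM z hz
    rw [MM.aeval_charpoly_det] at hz
    obtain ⟨x, hx, hAx⟩ := MM.pos_sol C hZ hM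
    exact MM.gershgorin C x hx (MM.dom_of_Z C hZ x hx hAx) z hz
  · intro h
    refine MM.converse C hZ ?_
    intro z hz
    exact h z (by rw [MM.aeval_charpoly_det]; exact hz)
end

section
/- Let A = (a_{ij}) be a real m×m matrix, let ξ_1,…,ξ_m > 0, and let α > 0 be such that for every j = 1,…,m: a_{jj} + Σ_{i≠j} (ξ_i/ξ_j)|a_{ij}| ≤ −α. Then every differentiable function w : [0,∞) → ℝ^m satisfying w'(t) = A w(t) for all t ≥ 0 satisfies Σ_{i=1}^m ξ_i|w_i(t)| ≤ e^{−αt} Σ_{i=1}^m ξ_i|w_i(0)| for all t ≥ 0. -/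
open Finset

theorem stmt14 (m : ℕ) (A : Matrix (Fin m) (Fin m) ℝ)
    (ξ : Fin m → ℝ) (hξ : ∀ i, 0 < ξ i) (α : ℝ) (hα : 0 < α)
    (hA : ∀ j : Fin m,
      A j j + (∑ i ∈ Finset.univ.erase j, (ξ i / ξ j) * |A i j|) ≤ -α)
    (w : ℝ → Fin m → ℝ)
    (hw : ∀ t : ℝ, 0 ≤ t → HasDerivAt w (A.mulVec (w t)) t) :
    ∀ t : ℝ, 0 ≤ t →
      (∑ i, ξ i * |w t i|) ≤ Real.exp (-α * t) * ∑ i, ξ i * |w 0 i| := by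
  classical
  intro T hT
  -- derivative candidate for each |w · i|
  set d : Fin m → ℝ → ℝ := fun i t =>
    if 0 < w t i then A.mulVec (w t) i
    else if w t i < 0 then -(A.mulVec (w t) i)
    else |A.mulVec (w t) i| with hd
  have hcomp : ∀ (i : Fin m) (t : ℝ), 0 ≤ t →
      HasDerivAt (fun s => w s i) (A.mulVec (w t) i) t := fun i t ht =>
    hasDerivAt_pi.1 (hw t ht) i
  have habs : ∀ (i : Fin m) (t : ℝ), 0 ≤ t →
      HasDerivWithinAt (fun s => |w s i|) (d i t) (Set.Ici t) t := by
    intro i t ht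
    have hwi := hcomp i t ht
    rcases lt_trichotomy (w t i) 0 with hneg | hzero | hpos
    · have h1 : ∀ᶠ s in nhds t, w s i < 0 :=
        hwi.continuousAt.eventually_lt_const hneg
      have heq : (fun s => |w s i|) =ᶠ[nhds t] fun s => -(w s i) := by
        filter_upwards [h1] with s hs
        exact abs_of_neg hs
      have := hwi.neg.congr_of_eventuallyEq heq
      have hdv : d i t = -(A.mulVec (w t) i) := by
        rw [hd]; simp only [if_neg (by linarith : ¬ 0 < w t i), if_pos hneg]
      rw [hdv]
      exact this.hasDerivWithinAt
    · have hslope : Filter.Tendsto (slope (fun s => w s i) t) (nhdsWithin t (Set.Ioi t))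
          (nhds (A.mulVec (w t) i)) := by
        have := hasDerivWithinAt_iff_tendsto_slope.1 (hwi.hasDerivWithinAt (s := Set.Ici t))
        rwa [Set.Ici_sdiff_left] at this
      have habs2 : Filter.Tendsto (fun z => |slope (fun s => w s i) t z|)
          (nhdsWithin t (Set.Ioi t)) (nhds |A.mulVec (w t) i|) := hslope.abs
      have hder : HasDerivWithinAt (fun s => |w s i|) |A.mulVec (w t) i| (Set.Ici t) t := by
        rw [hasDerivWithinAt_iff_tendsto_slope, Set.Ici_sdiff_left]
        refine habs2.congr' ?_
        filter_upwards [self_mem_nhdsWithin] with z hz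
        have hzt : (0:ℝ) < z - t := sub_pos.2 hz
        rw [slope_def_field, slope_def_field, hzero, abs_zero, abs_div,
          abs_of_pos hzt]
        rw [sub_zero, sub_zero]
      have hdv : d i t = |A.mulVec (w t) i| := by
        rw [hd]; simp [hzero]
      rw [hdv]; exact hder
    · have h1 : ∀ᶠ s in nhds t, 0 < w s i :=
        hwi.continuousAt.eventually_const_lt hpos
      have heq : (fun s => |w s i|) =ᶠ[nhds t] fun s => w s i := by
        filter_upwards [h1] with s hs
        exact abs_of_pos hs
      have := hwi.congr_of_eventuallyEq heq
      have hdv : d i t = A.mulVec (w t) i := by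
        rw [hd]; simp only [if_pos hpos]
      rw [hdv]
      exact this.hasDerivWithinAt
  -- pointwise bound on d
  have hdle : ∀ (i : Fin m) (t : ℝ), 0 ≤ t →
      d i t ≤ A i i * |w t i| + ∑ j ∈ Finset.univ.erase i, |A i j| * |w t j| := by
    intro i t ht
    have hsum : A.mulVec (w t) i
        = A i i * w t i + ∑ j ∈ Finset.univ.erase i, A i j * w t j := by
      rw [Matrix.mulVec, dotProduct]
      exact (Finset.add_sum_erase Finset.univ (fun j => A i j * w t j)
        (Finset.mem_univ i)).symm
    have hrest : (∑ j ∈ Finset.univ.erase i, A i j * w t j)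
        ≤ ∑ j ∈ Finset.univ.erase i, |A i j| * |w t j| := by
      refine Finset.sum_le_sum fun j _ => ?_
      calc A i j * w t j ≤ |A i j * w t j| := le_abs_self _
        _ = |A i j| * |w t j| := abs_mul _ _
    have hrest' : -(∑ j ∈ Finset.univ.erase i, A i j * w t j)
        ≤ ∑ j ∈ Finset.univ.erase i, |A i j| * |w t j| := by
      rw [← Finset.sum_neg_distrib]
      refine Finset.sum_le_sum fun j _ => ?_
      calc -(A i j * w t j) ≤ |A i j * w t j| := neg_le_abs _
        _ = |A i j| * |w t j| := abs_mul _ _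
    rcases lt_trichotomy (w t i) 0 with hneg | hzero | hpos
    · have hdv : d i t = -(A.mulVec (w t) i) := by
        rw [hd]; simp only [if_neg (by linarith : ¬ 0 < w t i), if_pos hneg]
      rw [hdv, hsum, abs_of_neg hneg]
      have := hrest'
      linarith
    · have hdv : d i t = |A.mulVec (w t) i| := by rw [hd]; simp [hzero]
      rw [hdv, hsum, hzero, mul_zero, zero_add, abs_zero, mul_zero, zero_add]
      calc |∑ j ∈ Finset.univ.erase i, A i j * w t j|
          ≤ ∑ j ∈ Finset.univ.erase i, |A i j * w t j| :=
            Finset.abs_sum_le_sum_abs _ _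
        _ = ∑ j ∈ Finset.univ.erase i, |A i j| * |w t j| := by
            refine Finset.sum_congr rfl fun j _ => abs_mul _ _
    · have hdv : d i t = A.mulVec (w t) i := by rw [hd]; simp only [if_pos hpos]
      rw [hdv, hsum, abs_of_pos hpos]
      linarith
  -- total bound : Σ ξ d ≤ -α Σ ξ |w|
  have hbound : ∀ t : ℝ, 0 ≤ t →
      (∑ i, ξ i * d i t) ≤ -α * ∑ i, ξ i * |w t i| := by
    intro t ht
    have swap : (∑ i, ∑ j ∈ Finset.univ.erase i, ξ i * |A i j| * |w t j|)
        = ∑ j, ∑ i ∈ Finset.univ.erase j, ξ i * |A i j| * |w t j| := by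
      refine Finset.sum_comm' ?_
      intro i j
      simp [Finset.mem_erase, eq_comm, and_comm]
    calc (∑ i, ξ i * d i t)
        ≤ ∑ i, ξ i * (A i i * |w t i| + ∑ j ∈ Finset.univ.erase i, |A i j| * |w t j|) :=
          Finset.sum_le_sum fun i _ => mul_le_mul_of_nonneg_left (hdle i t ht) (hξ i).le
      _ = ∑ i, (ξ i * A i i * |w t i|)
            + ∑ i, ∑ j ∈ Finset.univ.erase i, ξ i * |A i j| * |w t j| := by
          rw [← Finset.sum_add_distrib]
          refine Finset.sum_congr rfl fun i _ => ?_
          rw [mul_add, Finset.mul_sum]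
          ring_nf
      _ = ∑ j, (ξ j * A j j + ∑ i ∈ Finset.univ.erase j, ξ i * |A i j|) * |w t j| := by
          rw [swap, ← Finset.sum_add_distrib]
          refine Finset.sum_congr rfl fun j _ => ?_
          rw [add_mul, Finset.sum_mul]
      _ ≤ ∑ j, (-α * ξ j) * |w t j| := by
          refine Finset.sum_le_sum fun j _ => ?_
          refine mul_le_mul_of_nonneg_right ?_ (abs_nonneg _)
          have hj := hA j
          have hpos := hξ j
          have hfac : ξ j * A j j + ∑ i ∈ Finset.univ.erase j, ξ i * |A i j|
              = ξ j * (A j j + ∑ i ∈ Finset.univ.erase j, (ξ i / ξ j) * |A i j|) := by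
            rw [mul_add, Finset.mul_sum]
            refine congrArg _ (Finset.sum_congr rfl fun i _ => ?_)
            field_simp
          rw [hfac]
          calc ξ j * (A j j + ∑ i ∈ Finset.univ.erase j, (ξ i / ξ j) * |A i j|)
              ≤ ξ j * (-α) := mul_le_mul_of_nonneg_left hj hpos.le
            _ = -α * ξ j := mul_comm _ _
      _ = -α * ∑ i, ξ i * |w t i| := by
          rw [Finset.mul_sum]
          exact Finset.sum_congr rfl fun i _ => by ring
  -- the Lyapunov function and its right derivative
  set V : ℝ → ℝ := fun s => ∑ i, ξ i * |w s i| with hV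
  have hVder : ∀ t : ℝ, 0 ≤ t →
      HasDerivWithinAt V (∑ i, ξ i * d i t) (Set.Ici t) t := by
    intro t ht
    exact HasDerivWithinAt.fun_sum fun i _ => ((habs i t ht).const_mul (ξ i))
  have hVcont : ContinuousOn V (Set.Icc 0 T) := by
    intro s hs
    refine ContinuousAt.continuousWithinAt ?_
    exact tendsto_finset_sum _ fun i _ =>
      ((hcomp i s hs.1).continuousAt.abs).const_mul (ξ i)
  have key := le_gronwallBound_of_liminf_deriv_right_le (a := 0) (b := T)
    (f := V) (f' := fun t => ∑ i, ξ i * d i t) (δ := V 0) (K := -α) (ε := 0)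
    hVcont ?_ le_rfl ?_ T ⟨hT, le_rfl⟩
  · rw [gronwallBound_ε0, sub_zero] at key
    calc (∑ i, ξ i * |w T i|) = V T := rfl
      _ ≤ V 0 * Real.exp (-α * T) := key
      _ = Real.exp (-α * T) * ∑ i, ξ i * |w 0 i| := mul_comm _ _
  · intro x hx r hr
    have hx0 : (0:ℝ) ≤ x := hx.1
    have hder := hVder x hx0
    have hslope : Filter.Tendsto (slope V x) (nhdsWithin x (Set.Ioi x))
        (nhds (∑ i, ξ i * d i x)) := by
      have := hasDerivWithinAt_iff_tendsto_slope.1 hder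
      rwa [Set.Ici_sdiff_left] at this
    have hev : ∀ᶠ z in nhdsWithin x (Set.Ioi x), slope V x z < r :=
      hslope.eventually_lt_const hr
    refine (hev.mono fun z hz => ?_).frequently
    rwa [slope_def_field, div_eq_inv_mul] at hz
  · intro x hx
    have := hbound x hx.1
    simpa using this
end
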